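/- Any two maximal 2-caps in F_3^3 (i.e., 2-caps of size 5) are affinely equivalent: there is an invertible affine transformation of F_3^3 mapping one onto the other. -/
import Mathlib

abbrev V3 := Fin 3 → ZMod 3

def IsCap (d : ℕ) {n : ℕ} (C : Set (Fin n → ZMod 3)) : Prop :=
  ∀ s : Finset (Fin n → ZMod 3), ↑s ⊆ C → s.card ≤ d + 2 →
    AffineIndependent (ZMod 3) ((↑) : s → (Fin n → ZMod 3))

lemma cap4 {C : Finset V3} (hC : IsCap 2 (C : Set V3)) {a b c d : V3}
    (ha : a ∈ C) (hb : b ∈ C) (hc : c ∈ C) (hd : d ∈ C)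
    (hab : a ≠ b) (hac : a ≠ c) (had : a ≠ d) (hbc : b ≠ c) (hbd : b ≠ d) (hcd : c ≠ d) :
    AffineIndependent (ZMod 3) ![a, b, c, d] := by
  classical
  set s : Finset V3 := {a, b, c, d} with hs
  have hma : a ∈ s := by simp [hs]
  have hmb : b ∈ s := by simp [hs]
  have hmc : c ∈ s := by simp [hs]
  have hmd : d ∈ s := by simp [hs]
  have hsub : (s : Set V3) ⊆ C := by
    intro x hx
    simp only [hs, Finset.coe_insert, Finset.coe_singleton, Set.mem_insert_iff,
      Set.mem_singleton_iff] at hx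
    rcases hx with rfl | rfl | rfl | rfl <;> simpa
  have hcard : s.card ≤ 2 + 2 := by
    refine (Finset.card_insert_le _ _).trans (Nat.succ_le_succ ?_)
    refine (Finset.card_insert_le _ _).trans (Nat.succ_le_succ ?_)
    refine (Finset.card_insert_le _ _).trans (Nat.succ_le_succ ?_)
    simp
  have hAI := hC s hsub hcard
  have hginj : Function.Injective (![⟨a, hma⟩, ⟨b, hmb⟩, ⟨c, hmc⟩, ⟨d, hmd⟩] : Fin 4 → s) := by
    intro i j hij
    fin_cases i <;> fin_cases j <;> simp_all
  have he : ![a, b, c, d] = Subtype.val ∘ (![⟨a, hma⟩, ⟨b, hmb⟩, ⟨c, hmc⟩, ⟨d, hmd⟩] : Fin 4 → s) := by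
    funext i
    fin_cases i <;> rfl
  rw [he]
  exact hAI.comp_embedding ⟨_, hginj⟩

lemma cap_rel {C : Finset V3} (hC : IsCap 2 (C : Set V3)) {a b c d : V3}
    (ha : a ∈ C) (hb : b ∈ C) (hc : c ∈ C) (hd : d ∈ C)
    (hab : a ≠ b) (hac : a ≠ c) (had : a ≠ d) (hbc : b ≠ c) (hbd : b ≠ d) (hcd : c ≠ d)
    (w0 w1 w2 w3 : ZMod 3) (hw : w0 + w1 + w2 + w3 = 0)
    (hrel : w0 • a + w1 • b + w2 • c + w3 • d = 0) :
    w0 = 0 ∧ w1 = 0 ∧ w2 = 0 ∧ w3 = 0 := by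
  have hAI := cap4 hC ha hb hc hd hab hac had hbc hbd hcd
  rw [affineIndependent_iff] at hAI
  have key := hAI Finset.univ ![w0, w1, w2, w3]
    (by simpa [Fin.sum_univ_four] using hw)
    (by simpa [Fin.sum_univ_four] using hrel)
  exact ⟨by simpa using key 0 (Finset.mem_univ _), by simpa using key 1 (Finset.mem_univ _),
    by simpa using key 2 (Finset.mem_univ _), by simpa using key 3 (Finset.mem_univ _)⟩

lemma capLI {C : Finset V3} (hC : IsCap 2 (C : Set V3)) {a b c d : V3}
    (ha : a ∈ C) (hb : b ∈ C) (hc : c ∈ C) (hd : d ∈ C)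
    (hab : a ≠ b) (hac : a ≠ c) (had : a ≠ d) (hbc : b ≠ c) (hbd : b ≠ d) (hcd : c ≠ d) :
    LinearIndependent (ZMod 3) ![b - a, c - a, d - a] := by
  rw [Fintype.linearIndependent_iff]
  intro g hg
  simp only [Fin.sum_univ_three, Matrix.cons_val_zero, Matrix.cons_val_one, Matrix.head_cons,
    Matrix.cons_val_two, Matrix.tail_cons] at hg
  have hrel : (-(g 0 + g 1 + g 2)) • a + g 0 • b + g 1 • c + g 2 • d = 0 := by
    have e : (-(g 0 + g 1 + g 2)) • a + g 0 • b + g 1 • c + g 2 • d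
        = g 0 • (b - a) + g 1 • (c - a) + g 2 • (d - a) := by module
    rw [e, hg]
  obtain ⟨-, h0, h1, h2⟩ := cap_rel hC ha hb hc hd hab hac had hbc hbd hcd _ _ _ _ (by ring) hrel
  intro i
  fin_cases i <;> assumption

lemma exists_enum {C : Finset V3} (h5 : C.card = 5) :
    ∃ p : Fin 5 → V3, Function.Injective p ∧
      (C : Set V3) = {p 0, p 1, p 2, p 3, p 4} := by
  classical
  obtain ⟨a, t1, hat, rfl, ht1⟩ := Finset.card_eq_succ.mp h5
  obtain ⟨b, t2, hbt, rfl, ht2⟩ := Finset.card_eq_succ.mp ht1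
  obtain ⟨c, t3, hct, rfl, ht3⟩ := Finset.card_eq_succ.mp ht2
  obtain ⟨d, t4, hdt, rfl, ht4⟩ := Finset.card_eq_succ.mp ht3
  obtain ⟨e, rfl⟩ := Finset.card_eq_one.mp ht4
  simp only [Finset.mem_insert, Finset.mem_singleton, not_or] at hat hbt hct hdt
  refine ⟨![a, b, c, d, e], ?_, ?_⟩
  · intro i j hij
    fin_cases i <;> fin_cases j <;> simp_all
  · show _ = ({a, b, c, d, e} : Set V3)
    simp [Finset.coe_insert]

lemma zmod3_cases : ∀ y : ZMod 3, y ≠ 0 → y = 1 ∨ y = 2 := by decide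

set_option maxHeartbeats 2000000 in
lemma cap_sum {C : Finset V3} (hC : IsCap 2 (C : Set V3)) (h5 : C.card = 5) :
    ∃ p : Fin 5 → V3, Function.Injective p ∧
      (C : Set V3) = {p 0, p 1, p 2, p 3, p 4} ∧
      p 4 = p 0 + p 1 + p 2 + p 3 := by
  classical
  obtain ⟨p, hinj, hset⟩ := exists_enum h5
  have hmem : ∀ i, p i ∈ C := by
    intro i
    rw [← Finset.mem_coe, hset]
    fin_cases i <;> simp
  have hne : ∀ i j : Fin 5, i ≠ j → p i ≠ p j := fun i j h => hinj.ne h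
  -- a basis from the first four points
  have hLI : LinearIndependent (ZMod 3) ![p 1 - p 0, p 2 - p 0, p 3 - p 0] :=
    capLI hC (hmem 0) (hmem 1) (hmem 2) (hmem 3)
      (hne 0 1 (by decide)) (hne 0 2 (by decide)) (hne 0 3 (by decide))
      (hne 1 2 (by decide)) (hne 1 3 (by decide)) (hne 2 3 (by decide))
  obtain ⟨a0, a1, a2, ha0, ha1, ha2, hs, h4⟩ :
      ∃ a0 a1 a2 : ZMod 3, a0 ≠ 0 ∧ a1 ≠ 0 ∧ a2 ≠ 0 ∧ a0 + a1 + a2 ≠ 1 ∧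
        a0 • (p 1 - p 0) + a1 • (p 2 - p 0) + a2 • (p 3 - p 0) = p 4 - p 0 := by
    have hcard3 : Fintype.card (Fin 3) = Module.finrank (ZMod 3) V3 := by simp
    set B := basisOfLinearIndependentOfCardEqFinrank hLI hcard3 with hB
    set A : Fin 3 → ZMod 3 := fun i => B.repr (p 4 - p 0) i with hA
    have h4 : A 0 • (p 1 - p 0) + A 1 • (p 2 - p 0) + A 2 • (p 3 - p 0) = p 4 - p 0 := by
      have := B.sum_repr (p 4 - p 0)
      rw [Fin.sum_univ_three] at this
      simpa [hA, hB, coe_basisOfLinearIndependentOfCardEqFinrank] using this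
    -- constraints
    have ha0 : A 0 ≠ 0 := by
      intro h
      have h4' : A 1 • (p 2 - p 0) + A 2 • (p 3 - p 0) = p 4 - p 0 := by
        rw [h, zero_smul, zero_add] at h4; exact h4
      have hcomb : (A 1 + A 2 - 1) • p 0 + (-(A 1)) • p 2 + (-(A 2)) • p 3 + (1 : ZMod 3) • p 4 = 0 := by
        have e : (A 1 + A 2 - 1) • p 0 + (-(A 1)) • p 2 + (-(A 2)) • p 3 + (1 : ZMod 3) • p 4
            = (p 4 - p 0) - (A 1 • (p 2 - p 0) + A 2 • (p 3 - p 0)) := by module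
        rw [e, h4', sub_self]
      have := (cap_rel hC (hmem 0) (hmem 2) (hmem 3) (hmem 4)
        (hne 0 2 (by decide)) (hne 0 3 (by decide)) (hne 0 4 (by decide))
        (hne 2 3 (by decide)) (hne 2 4 (by decide)) (hne 3 4 (by decide))
        _ _ _ _ (by ring) hcomb).2.2.2
      exact one_ne_zero this
    have ha1 : A 1 ≠ 0 := by
      intro h
      have h4' : A 0 • (p 1 - p 0) + A 2 • (p 3 - p 0) = p 4 - p 0 := by
        rw [h, zero_smul, add_zero] at h4; exact h4
      have hcomb : (A 0 + A 2 - 1) • p 0 + (-(A 0)) • p 1 + (-(A 2)) • p 3 + (1 : ZMod 3) • p 4 = 0 := by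
        have e : (A 0 + A 2 - 1) • p 0 + (-(A 0)) • p 1 + (-(A 2)) • p 3 + (1 : ZMod 3) • p 4
            = (p 4 - p 0) - (A 0 • (p 1 - p 0) + A 2 • (p 3 - p 0)) := by module
        rw [e, h4', sub_self]
      have := (cap_rel hC (hmem 0) (hmem 1) (hmem 3) (hmem 4)
        (hne 0 1 (by decide)) (hne 0 3 (by decide)) (hne 0 4 (by decide))
        (hne 1 3 (by decide)) (hne 1 4 (by decide)) (hne 3 4 (by decide))
        _ _ _ _ (by ring) hcomb).2.2.2
      exact one_ne_zero this
    have ha2 : A 2 ≠ 0 := by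
      intro h
      have h4' : A 0 • (p 1 - p 0) + A 1 • (p 2 - p 0) = p 4 - p 0 := by
        rw [h, zero_smul, add_zero] at h4; exact h4
      have hcomb : (A 0 + A 1 - 1) • p 0 + (-(A 0)) • p 1 + (-(A 1)) • p 2 + (1 : ZMod 3) • p 4 = 0 := by
        have e : (A 0 + A 1 - 1) • p 0 + (-(A 0)) • p 1 + (-(A 1)) • p 2 + (1 : ZMod 3) • p 4
            = (p 4 - p 0) - (A 0 • (p 1 - p 0) + A 1 • (p 2 - p 0)) := by module
        rw [e, h4', sub_self]
      have := (cap_rel hC (hmem 0) (hmem 1) (hmem 2) (hmem 4)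
        (hne 0 1 (by decide)) (hne 0 2 (by decide)) (hne 0 4 (by decide))
        (hne 1 2 (by decide)) (hne 1 4 (by decide)) (hne 2 4 (by decide))
        _ _ _ _ (by ring) hcomb).2.2.2
      exact one_ne_zero this
    have hs : A 0 + A 1 + A 2 ≠ 1 := by
      intro h
      have hcomb : (-(A 0)) • p 1 + (-(A 1)) • p 2 + (-(A 2)) • p 3 + (1 : ZMod 3) • p 4 = 0 := by
        have e : (-(A 0)) • p 1 + (-(A 1)) • p 2 + (-(A 2)) • p 3 + (1 : ZMod 3) • p 4
            = ((p 4 - p 0) - (A 0 • (p 1 - p 0) + A 1 • (p 2 - p 0) + A 2 • (p 3 - p 0)))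
              + (1 - (A 0 + A 1 + A 2)) • p 0 := by module
        rw [e, h4, sub_self, zero_add, h, sub_self, zero_smul]
      have := (cap_rel hC (hmem 1) (hmem 2) (hmem 3) (hmem 4)
        (hne 1 2 (by decide)) (hne 1 3 (by decide)) (hne 1 4 (by decide))
        (hne 2 3 (by decide)) (hne 2 4 (by decide)) (hne 3 4 (by decide))
        _ _ _ _ (by linear_combination -h) hcomb).2.2.2
      exact one_ne_zero this
    exact ⟨A 0, A 1, A 2, ha0, ha1, ha2, hs, h4⟩
  -- case analysis on the coefficients
  rcases zmod3_cases _ ha0 with h0 | h0 <;> rcases zmod3_cases _ ha1 with h1 | h1 <;>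
    rcases zmod3_cases _ ha2 with h2 | h2
  · -- (1,1,1)
    refine ⟨p, hinj, hset, ?_⟩
    rw [h0, h1, h2] at h4
    funext j
    have h := congrFun h4 j
    simp only [Pi.add_apply, Pi.sub_apply, Pi.smul_apply, smul_eq_mul, one_mul] at h ⊢
    revert h
    generalize p 0 j = x0
    generalize p 1 j = x1
    generalize p 2 j = x2
    generalize p 3 j = x3
    generalize p 4 j = x4
    revert x0 x1 x2 x3 x4
    decide
  · -- (1,1,2) sum = 1 : impossible
    exact absurd (by rw [h0, h1, h2]; decide) hs
  · -- (1,2,1) sum = 1 : impossible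
    exact absurd (by rw [h0, h1, h2]; decide) hs
  · -- (1,2,2) : p 1 = p 0 + p 2 + p 3 + p 4
    refine ⟨![p 0, p 2, p 3, p 4, p 1], ?_, ?_, ?_⟩
    · intro i j hij
      fin_cases i <;> fin_cases j <;> simp_all [hinj.eq_iff]
    · show (C : Set V3) = _
      rw [hset]
      ext x
      simp only [Set.mem_insert_iff, Set.mem_singleton_iff]
      constructor <;> (intro hx; rcases hx with h | h | h | h | h <;> simp [h] <;> tauto)
    · show p 1 = p 0 + p 2 + p 3 + p 4
      rw [h0, h1, h2] at h4
      funext j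
      have h := congrFun h4 j
      simp only [Pi.add_apply, Pi.sub_apply, Pi.smul_apply, smul_eq_mul, one_mul] at h ⊢
      revert h
      generalize p 0 j = x0
      generalize p 1 j = x1
      generalize p 2 j = x2
      generalize p 3 j = x3
      generalize p 4 j = x4
      revert x0 x1 x2 x3 x4
      decide
  · -- (2,1,1) sum = 1 : impossible
    exact absurd (by rw [h0, h1, h2]; decide) hs
  · -- (2,1,2) : p 2 = p 0 + p 1 + p 3 + p 4
    refine ⟨![p 0, p 1, p 3, p 4, p 2], ?_, ?_, ?_⟩
    · intro i j hij
      fin_cases i <;> fin_cases j <;> simp_all [hinj.eq_iff]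
    · show (C : Set V3) = _
      rw [hset]
      ext x
      simp only [Set.mem_insert_iff, Set.mem_singleton_iff]
      constructor <;> (intro hx; rcases hx with h | h | h | h | h <;> simp [h] <;> tauto)
    · show p 2 = p 0 + p 1 + p 3 + p 4
      rw [h0, h1, h2] at h4
      funext j
      have h := congrFun h4 j
      simp only [Pi.add_apply, Pi.sub_apply, Pi.smul_apply, smul_eq_mul, one_mul] at h ⊢
      revert h
      generalize p 0 j = x0
      generalize p 1 j = x1
      generalize p 2 j = x2
      generalize p 3 j = x3
      generalize p 4 j = x4
      revert x0 x1 x2 x3 x4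
      decide
  · -- (2,2,1) : p 3 = p 0 + p 1 + p 2 + p 4
    refine ⟨![p 0, p 1, p 2, p 4, p 3], ?_, ?_, ?_⟩
    · intro i j hij
      fin_cases i <;> fin_cases j <;> simp_all [hinj.eq_iff]
    · show (C : Set V3) = _
      rw [hset]
      ext x
      simp only [Set.mem_insert_iff, Set.mem_singleton_iff]
      constructor <;> (intro hx; rcases hx with h | h | h | h | h <;> simp [h] <;> tauto)
    · show p 3 = p 0 + p 1 + p 2 + p 4
      rw [h0, h1, h2] at h4
      funext j
      have h := congrFun h4 j
      simp only [Pi.add_apply, Pi.sub_apply, Pi.smul_apply, smul_eq_mul, one_mul] at h ⊢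
      revert h
      generalize p 0 j = x0
      generalize p 1 j = x1
      generalize p 2 j = x2
      generalize p 3 j = x3
      generalize p 4 j = x4
      revert x0 x1 x2 x3 x4
      decide
  · -- (2,2,2) : p 0 = p 4 + p 1 + p 2 + p 3
    refine ⟨![p 4, p 1, p 2, p 3, p 0], ?_, ?_, ?_⟩
    · intro i j hij
      fin_cases i <;> fin_cases j <;> simp_all [hinj.eq_iff]
    · show (C : Set V3) = _
      rw [hset]
      ext x
      simp only [Set.mem_insert_iff, Set.mem_singleton_iff]
      constructor <;> (intro hx; rcases hx with h | h | h | h | h <;> simp [h] <;> tauto)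
    · show p 0 = p 4 + p 1 + p 2 + p 3
      rw [h0, h1, h2] at h4
      funext j
      have h := congrFun h4 j
      simp only [Pi.add_apply, Pi.sub_apply, Pi.smul_apply, smul_eq_mul, one_mul] at h ⊢
      revert h
      generalize p 0 j = x0
      generalize p 1 j = x1
      generalize p 2 j = x2
      generalize p 3 j = x3
      generalize p 4 j = x4
      revert x0 x1 x2 x3 x4
      decide

lemma exists_linequiv {v w : Fin 3 → V3} (hv : LinearIndependent (ZMod 3) v)
    (hw : LinearIndependent (ZMod 3) w) :
    ∃ L : V3 ≃ₗ[ZMod 3] V3, ∀ i, L (v i) = w i := by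
  have hc : Fintype.card (Fin 3) = Module.finrank (ZMod 3) V3 := by simp
  refine ⟨(basisOfLinearIndependentOfCardEqFinrank hv hc).equiv
    (basisOfLinearIndependentOfCardEqFinrank hw hc) (Equiv.refl _), fun i => ?_⟩
  have h := Module.Basis.equiv_apply (basisOfLinearIndependentOfCardEqFinrank hv hc) i
    (basisOfLinearIndependentOfCardEqFinrank hw hc) (Equiv.refl _)
  rwa [coe_basisOfLinearIndependentOfCardEqFinrank, coe_basisOfLinearIndependentOfCardEqFinrank,
    Equiv.refl_apply] at h

lemma tri (x : V3) : x + x + x = 0 := by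
  funext j
  have : ∀ y : ZMod 3, y + y + y = 0 := by decide
  simpa using this (x j)

/-- Any two maximal 2-caps in `F_3^3` (2-caps of size 5) are affinely
equivalent. -/
theorem maximal_caps_affinely_equivalent (C D : Finset (Fin 3 → ZMod 3))
    (hC : IsCap 2 (C : Set (Fin 3 → ZMod 3))) (hD : IsCap 2 (D : Set (Fin 3 → ZMod 3)))
    (hC5 : C.card = 5) (hD5 : D.card = 5) :
    ∃ T : (Fin 3 → ZMod 3) ≃ᵃ[ZMod 3] (Fin 3 → ZMod 3), T '' (C : Set (Fin 3 → ZMod 3)) = (D : Set (Fin 3 → ZMod 3)) := by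
  classical
  obtain ⟨p, hpinj, hpset, hp4⟩ := cap_sum hC hC5
  obtain ⟨q, hqinj, hqset, hq4⟩ := cap_sum hD hD5
  have hpmem : ∀ i, p i ∈ C := by
    intro i; rw [← Finset.mem_coe, hpset]; fin_cases i <;> simp
  have hqmem : ∀ i, q i ∈ D := by
    intro i; rw [← Finset.mem_coe, hqset]; fin_cases i <;> simp
  have hpne : ∀ i j : Fin 5, i ≠ j → p i ≠ p j := fun i j h => hpinj.ne h
  have hqne : ∀ i j : Fin 5, i ≠ j → q i ≠ q j := fun i j h => hqinj.ne h
  have hpLI : LinearIndependent (ZMod 3) ![p 1 - p 0, p 2 - p 0, p 3 - p 0] :=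
    capLI hC (hpmem 0) (hpmem 1) (hpmem 2) (hpmem 3)
      (hpne 0 1 (by decide)) (hpne 0 2 (by decide)) (hpne 0 3 (by decide))
      (hpne 1 2 (by decide)) (hpne 1 3 (by decide)) (hpne 2 3 (by decide))
  have hqLI : LinearIndependent (ZMod 3) ![q 1 - q 0, q 2 - q 0, q 3 - q 0] :=
    capLI hD (hqmem 0) (hqmem 1) (hqmem 2) (hqmem 3)
      (hqne 0 1 (by decide)) (hqne 0 2 (by decide)) (hqne 0 3 (by decide))
      (hqne 1 2 (by decide)) (hqne 1 3 (by decide)) (hqne 2 3 (by decide))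
  obtain ⟨L, hL⟩ := exists_linequiv hpLI hqLI
  have hL1 : L (p 1 - p 0) = q 1 - q 0 := by simpa using hL 0
  have hL2 : L (p 2 - p 0) = q 2 - q 0 := by simpa using hL 1
  have hL3 : L (p 3 - p 0) = q 3 - q 0 := by simpa using hL 2
  set T : V3 ≃ᵃ[ZMod 3] V3 :=
    ((AffineEquiv.constVAdd (ZMod 3) V3 (-(p 0))).trans L.toAffineEquiv).trans
      (AffineEquiv.constVAdd (ZMod 3) V3 (q 0)) with hT
  have hTx : ∀ x, T x = q 0 + L (x - p 0) := by
    intro x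
    simp [hT, AffineEquiv.trans_apply, vadd_eq_add]
    abel
  have hT0 : T (p 0) = q 0 := by rw [hTx, sub_self, map_zero, add_zero]
  have hT1 : T (p 1) = q 1 := by rw [hTx, hL1]; abel
  have hT2 : T (p 2) = q 2 := by rw [hTx, hL2]; abel
  have hT3 : T (p 3) = q 3 := by rw [hTx, hL3]; abel
  have hT4 : T (p 4) = q 4 := by
    rw [hTx]
    have e1 : p 4 - p 0 = (p 1 - p 0) + (p 2 - p 0) + (p 3 - p 0) := by
      rw [hp4]
      have e : p 0 + p 1 + p 2 + p 3 - p 0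
          = ((p 1 - p 0) + (p 2 - p 0) + (p 3 - p 0)) + (p 0 + p 0 + p 0) := by abel
      rw [e, tri, add_zero]
    rw [e1, map_add, map_add, hL1, hL2, hL3, hq4]
    have e2 : q 0 + q 1 + q 2 + q 3
        = q 0 + (q 1 - q 0 + (q 2 - q 0) + (q 3 - q 0)) + (q 0 + q 0 + q 0) := by abel
    rw [e2, tri, add_zero]
  refine ⟨T, ?_⟩
  rw [hpset, hqset]
  simp only [Set.image_insert_eq, Set.image_singleton, hT0, hT1, hT2, hT3, hT4]
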